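/- Suppose Λ⁺ − Rᵀ|Λ⁻|R is positive definite. Then there exists δ > 0 such that for every invertible q×q matrix S̃ with operator norm ‖S̃‖ < δ, setting S = S̃⁻¹|Λ⁻|^{1/2}, one has for all W⁺ ∈ ℝ^p and G ∈ ℝ^q that the strongly imposed inhomogeneous boundary condition W⁻ = R W⁺ + S⁻¹G yields the lower bound BT(W⁺, W⁻) ≥ −GᵀG; i.e., the boundary term is bounded from below solely in terms of the external data G. -/

import Mathlib

open Matrix
open scoped Matrix.Norms.L2Operator
open scoped MatrixOrder

lemma dot_self_nonneg' {n : ℕ} (x : Fin n → ℝ) : 0 ≤ x ⬝ᵥ x :=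
  Finset.sum_nonneg fun i _ => mul_self_nonneg (x i)

lemma dot_self_eq_norm_sq {n : ℕ} (x : Fin n → ℝ) :
    x ⬝ᵥ x = ‖(EuclideanSpace.equiv (Fin n) ℝ).symm x‖^2 := by
  rw [EuclideanSpace.norm_eq, Real.sq_sqrt (Finset.sum_nonneg fun i _ => sq_nonneg _)]
  simp [dotProduct, sq]

lemma dot_mulVec_le {m n : ℕ} (A : Matrix (Fin m) (Fin n) ℝ) (x : Fin n → ℝ) :
    (A *ᵥ x) ⬝ᵥ (A *ᵥ x) ≤ ‖A‖^2 * (x ⬝ᵥ x) := by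
  rw [dot_self_eq_norm_sq, dot_self_eq_norm_sq, ← mul_pow]
  exact pow_le_pow_left₀ (norm_nonneg _)
    (A.l2_opNorm_mulVec ((EuclideanSpace.equiv (Fin n) ℝ).symm x)) 2

lemma sym_dot {n : ℕ} (B : Matrix (Fin n) (Fin n) ℝ) (hB : Bᵀ = B) (x y : Fin n → ℝ) :
    x ⬝ᵥ (B *ᵥ y) = (B *ᵥ x) ⬝ᵥ y := by
  rw [dotProduct_mulVec, ← hB, vecMul_transpose, hB]

lemma posdef_lower {n : ℕ} {M : Matrix (Fin n) (Fin n) ℝ} (hM : M.PosDef) :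
    ∃ c > (0:ℝ), ∀ x : Fin n → ℝ, c * (x ⬝ᵥ x) ≤ x ⬝ᵥ M *ᵥ x := by
  set B := CFC.sqrt M with hBdef
  have hB2 : B * B = M := CFC.sqrt_mul_sqrt_self M hM.posSemidef.nonneg
  have hBH : Bᵀ = B := (CFC.sqrt_nonneg M).posSemidef.1
  have hdet : IsUnit B.det := by
    have hMd : 0 < M.det := hM.det_pos
    rw [← hB2, det_mul] at hMd
    exact isUnit_iff_ne_zero.2 (by intro h; rw [h] at hMd; simp at hMd)
  refine ⟨((‖B⁻¹‖ + 1)⁻¹)^2, by positivity, fun x => ?_⟩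
  have hx : x = B⁻¹ *ᵥ (B *ᵥ x) := by
    rw [mulVec_mulVec, nonsing_inv_mul _ hdet, one_mulVec]
  have hquad : x ⬝ᵥ M *ᵥ x = (B *ᵥ x) ⬝ᵥ (B *ᵥ x) := by
    rw [← hB2, ← mulVec_mulVec, sym_dot B hBH]
  have hle : x ⬝ᵥ x ≤ (‖B⁻¹‖ + 1)^2 * ((B *ᵥ x) ⬝ᵥ (B *ᵥ x)) := by
    have h1 : x ⬝ᵥ x ≤ ‖B⁻¹‖^2 * ((B *ᵥ x) ⬝ᵥ (B *ᵥ x)) := by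
      conv_lhs => rw [hx]
      exact dot_mulVec_le B⁻¹ (B *ᵥ x)
    have h2 : ‖B⁻¹‖^2 ≤ (‖B⁻¹‖ + 1)^2 := by nlinarith [norm_nonneg B⁻¹]
    have h3 : 0 ≤ (B *ᵥ x) ⬝ᵥ (B *ᵥ x) := dot_self_nonneg' _
    nlinarith
  rw [hquad]
  have hone : ((‖B⁻¹‖ + 1)⁻¹)^2 * ((‖B⁻¹‖ + 1)^2) = 1 := by
    rw [← mul_pow, inv_mul_cancel₀ (by positivity)]; norm_num
  have hmul := mul_le_mul_of_nonneg_left hle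
    (le_of_lt (by positivity : (0:ℝ) < ((‖B⁻¹‖ + 1)⁻¹)^2))
  rw [← mul_assoc, hone, one_mul] at hmul
  exact hmul


/-- If `Λ⁺ − Rᵀ|Λ⁻|R` is positive definite, then there exists `δ > 0` such that
for every invertible `S̃` with operator norm `‖S̃‖ < δ`, setting `S = S̃⁻¹|Λ⁻|^{1/2}`,
the strongly imposed inhomogeneous boundary condition `W⁻ = R W⁺ + S⁻¹G` yields
`BT(W⁺, W⁻) ≥ −GᵀG`. -/
theorem strong_inhomogeneous_bc_bound {p q : ℕ}
    (Λp : Matrix (Fin p) (Fin p) ℝ) (Λm : Matrix (Fin q) (Fin q) ℝ)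
    (hΛpDiag : Λp.IsDiag) (hΛpNonneg : ∀ i, 0 ≤ Λp i i)
    (hΛmDiag : Λm.IsDiag) (hΛmNeg : ∀ i, Λm i i < 0)
    (R : Matrix (Fin q) (Fin p) ℝ)
    (Λh : Matrix (Fin q) (Fin q) ℝ)
    (hΛh : Λh = Matrix.diagonal fun i => Real.sqrt (-Λm i i))
    (hPD : (Λp - Rᵀ * (-Λm) * R).PosDef) :
    ∃ δ > (0 : ℝ), ∀ St : Matrix (Fin q) (Fin q) ℝ, IsUnit St.det → ‖St‖ < δ →
      ∀ (S : Matrix (Fin q) (Fin q) ℝ), S = St⁻¹ * Λh →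
        ∀ (Wp : Fin p → ℝ) (G : Fin q → ℝ),
          Wp ⬝ᵥ Λp.mulVec Wp
            + (R.mulVec Wp + S⁻¹.mulVec G) ⬝ᵥ Λm.mulVec (R.mulVec Wp + S⁻¹.mulVec G)
            ≥ -(G ⬝ᵥ G) := by
  obtain ⟨c₁, hc₁, hlow⟩ := posdef_lower hPD
  set c₂ : ℝ := ‖Λh * R‖^2 with hc₂def
  have hc₂ : 0 ≤ c₂ := sq_nonneg _
  set ε : ℝ := c₁ / (c₂ + 1) with hεdef
  have hε : 0 < ε := by positivity
  refine ⟨Real.sqrt (ε / (ε + 1)), Real.sqrt_pos.2 (by positivity), ?_⟩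
  intro St hStdet hStnorm S hS Wp G
  -- basic facts about Λh
  have hΛmEq : Λm = Matrix.diagonal (fun i => Λm i i) := (hΛmDiag.diagonal_diag).symm
  have hΛhT : Λhᵀ = Λh := by rw [hΛh, diagonal_transpose]
  have hΛhΛh : Λh * Λh = -Λm := by
    rw [hΛh, diagonal_mul_diagonal]
    ext i j
    by_cases hij : i = j
    · subst hij
      simp [Real.mul_self_sqrt (by linarith [hΛmNeg i] : (0:ℝ) ≤ -Λm i i)]
    · simp [Matrix.diagonal_apply_ne _ hij, Matrix.neg_apply, hΛmDiag hij]
  have hΛhdet : IsUnit Λh.det := by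
    rw [hΛh, det_diagonal]
    exact isUnit_iff_ne_zero.2 (Finset.prod_ne_zero_iff.2 fun i _ =>
      ne_of_gt (Real.sqrt_pos.2 (by linarith [hΛmNeg i])))
  -- S⁻¹ and Λh * S⁻¹ = St
  have hSinv : S⁻¹ = Λh⁻¹ * St := by
    rw [hS, Matrix.mul_inv_rev, Matrix.nonsing_inv_nonsing_inv _ hStdet]
  have hΛhS : Λh *ᵥ (S⁻¹ *ᵥ G) = St *ᵥ G := by
    rw [hSinv, mulVec_mulVec, ← mul_assoc, mul_nonsing_inv _ hΛhdet, one_mul]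
  -- abbreviations
  set Wm : Fin q → ℝ := R *ᵥ Wp + S⁻¹ *ᵥ G with hWm
  set a : Fin q → ℝ := (Λh * R) *ᵥ Wp with ha
  set b : Fin q → ℝ := St *ᵥ G with hb
  have hΛhWm : Λh *ᵥ Wm = a + b := by
    rw [hWm, mulVec_add, hΛhS, ha, ← mulVec_mulVec]
  -- boundary term for W⁻
  have hBTm : Wm ⬝ᵥ Λm *ᵥ Wm = -((a + b) ⬝ᵥ (a + b)) := by
    have hΛmEq2 : Λm = -(Λh * Λh) := by rw [hΛhΛh]; simp
    rw [hΛmEq2, neg_mulVec, dotProduct_neg, ← mulVec_mulVec,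
      sym_dot Λh hΛhT, hΛhWm]
  -- Λp part
  have hNa : Wp ⬝ᵥ (Rᵀ * (-Λm) * R) *ᵥ Wp = a ⬝ᵥ a := by
    have hN : Rᵀ * (-Λm) * R = (Λh * R)ᵀ * (Λh * R) := by
      rw [← hΛhΛh, transpose_mul, hΛhT]
      simp only [Matrix.mul_assoc]
    rw [hN, ← mulVec_mulVec, dotProduct_mulVec, ← transpose_transpose (Λh * R),
      vecMul_transpose, transpose_transpose, ha]
  have hΛpSplit : Wp ⬝ᵥ Λp *ᵥ Wp
      = Wp ⬝ᵥ (Λp - Rᵀ * (-Λm) * R) *ᵥ Wp + a ⬝ᵥ a := by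
    rw [sub_mulVec, dotProduct_sub, hNa]; ring
  -- expand (a+b)⬝(a+b)
  have hexp : (a + b) ⬝ᵥ (a + b) = a ⬝ᵥ a + 2 * (a ⬝ᵥ b) + b ⬝ᵥ b := by
    rw [add_dotProduct, dotProduct_add, dotProduct_add, dotProduct_comm b a]; ring
  -- bounds
  have h1 : c₁ * (Wp ⬝ᵥ Wp) ≤ Wp ⬝ᵥ (Λp - Rᵀ * (-Λm) * R) *ᵥ Wp := hlow Wp
  have h2 : a ⬝ᵥ a ≤ c₂ * (Wp ⬝ᵥ Wp) := dot_mulVec_le (Λh * R) Wp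
  have h3 : b ⬝ᵥ b ≤ (ε / (ε + 1)) * (G ⬝ᵥ G) := by
    have := dot_mulVec_le St G
    have hn : ‖St‖^2 ≤ ε / (ε + 1) := by
      have h0 : (0:ℝ) ≤ ε / (ε + 1) := by positivity
      have := pow_le_pow_left₀ (norm_nonneg St) (le_of_lt hStnorm) 2
      rwa [Real.sq_sqrt h0] at this
    have hGG : 0 ≤ G ⬝ᵥ G := dot_self_nonneg' G
    nlinarith
  have h4 : 2 * (a ⬝ᵥ b) ≤ ε * (a ⬝ᵥ a) + ε⁻¹ * (b ⬝ᵥ b) := by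
    have hsq : 0 ≤ (ε • a - b) ⬝ᵥ (ε • a - b) := dot_self_nonneg' _
    simp only [sub_dotProduct, dotProduct_sub, smul_dotProduct, dotProduct_smul,
      smul_eq_mul, dotProduct_comm b a] at hsq
    have hne : ε ≠ 0 := ne_of_gt hε
    have h5 : 2 * ε * (a ⬝ᵥ b) ≤ ε^2 * (a ⬝ᵥ a) + b ⬝ᵥ b := by nlinarith
    have h6 := mul_le_mul_of_nonneg_left h5 (le_of_lt (inv_pos.2 hε))
    have e1 : ε⁻¹ * (2 * ε * (a ⬝ᵥ b)) = 2 * (a ⬝ᵥ b) := by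
      field_simp
    have e2 : ε⁻¹ * (ε^2 * (a ⬝ᵥ a) + b ⬝ᵥ b) = ε * (a ⬝ᵥ a) + ε⁻¹ * (b ⬝ᵥ b) := by
      field_simp
    rw [e1, e2] at h6
    exact h6
  -- arithmetic facts
  have hεc₂ : ε * c₂ ≤ c₁ := by
    rw [hεdef]
    rw [div_mul_eq_mul_div, div_le_iff₀ (by positivity)]
    nlinarith
  have hone : (1 + ε⁻¹) * (ε / (ε + 1)) = 1 := by
    field_simp
  have hWW : 0 ≤ Wp ⬝ᵥ Wp := dot_self_nonneg' Wp
  have haa : 0 ≤ a ⬝ᵥ a := dot_self_nonneg' a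
  have hbb : 0 ≤ b ⬝ᵥ b := dot_self_nonneg' b
  have hGG : 0 ≤ G ⬝ᵥ G := dot_self_nonneg' G
  rw [ge_iff_le, hBTm, hΛpSplit, hexp]
  nlinarith [mul_le_mul_of_nonneg_left h2 (le_of_lt hε), hone, h3, h4, h1,
    mul_le_mul_of_nonneg_left h3 (by positivity : (0:ℝ) ≤ 1 + ε⁻¹)]
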